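/- arXiv:2112.01623 — 2 statements merged into one kernel-verified Lean document; each statement's English description precedes it below -/
import Mathlib

section
/- Let J > 0, h > 0, R₀, R₁ ∈ SO(3), and ω₀, ω₁, M₀, M₁ ∈ ℝ³ satisfy the two discrete Legendre-transform equations S(J ω₀) = (J/(2h))(R₀ᵀ R₁ − R₁ᵀ R₀) − (h/2) S(M₀) and S(J ω₁) = (J/(2h))(R₀ᵀ R₁ − R₁ᵀ R₀) + (h/2) S(M₁). Then the explicit angular-velocity update holds: ω₁ = R₁ᵀ R₀ (ω₀ + (h/(2J)) M₀) + (h/(2J)) M₁. -/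
open Matrix

noncomputable section

/-- Vectors in ℝ³ with the Euclidean norm. -/
abbrev V3 : Type := EuclideanSpace ℝ (Fin 3)

/-- 3×3 real matrices. -/
abbrev M3 : Type := Matrix (Fin 3) (Fin 3) ℝ

/-- Cross-product (skew-symmetric) matrix of a vector: `S a *ᵥ v = a ×₃ v`. -/
def S (a : V3) : M3 := !![0, -a 2, a 1; a 2, 0, -a 0; -a 1, a 0, 0]

/-- Rescaled-Rodrigues rotation matrix `R(α) = I + (4/(4+‖α‖²))(S(α) + (1/2)S(α)²)`. -/
def Rot (α : V3) : M3 := 1 + (4 / (4 + ‖α‖ ^ 2)) • (S α + (1 / 2 : ℝ) • (S α * S α))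

/-- Action of a matrix on a vector. -/
def mulV (A : M3) (v : V3) : V3 := WithLp.toLp 2 (A.mulVec v)

lemma S_inj {x y : V3} (hxy : S x = S y) : x = y := by
  ext i
  have h12 := congrFun (congrFun hxy 1) 2
  have h02 := congrFun (congrFun hxy 0) 2
  have h01 := congrFun (congrFun hxy 0) 1
  simp [S] at h12 h02 h01
  fin_cases i <;> simp_all

lemma cross_poly (Q : M3) (a : V3) :
    S (WithLp.toLp 2 (Q.mulVec a)) * Q = Q.adjugateᵀ * S a := by
  ext i j
  fin_cases i <;> fin_cases j <;>
    simp [S, Matrix.mul_apply, Matrix.mulVec, dotProduct,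
      Fin.sum_univ_three, Matrix.adjugate_fin_three, Matrix.transpose_apply,
      Matrix.vecHead, Matrix.vecTail, Matrix.cons_val', Matrix.empty_val',
      Matrix.cons_val_zero, Matrix.cons_val_one, Matrix.head_cons, Function.comp] <;>
    ring

lemma conjS (Q : M3) (hQ : Qᵀ * Q = 1) (hdet : Q.det = 1) (a : V3) :
    Q * S a * Qᵀ = S (WithLp.toLp 2 (Q.mulVec a)) := by
  have hQ' : Q * Qᵀ = 1 := mul_eq_one_comm.mp hQ
  have hadj : Q.adjugate = Qᵀ := by
    calc Q.adjugate = Q.adjugate * (Q * Qᵀ) := by rw [hQ', mul_one]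
    _ = (Q.adjugate * Q) * Qᵀ := by rw [mul_assoc]
    _ = Qᵀ := by rw [Matrix.adjugate_mul, hdet, one_smul, one_mul]
  have h := cross_poly Q a
  rw [hadj, Matrix.transpose_transpose] at h
  calc Q * S a * Qᵀ = (S (WithLp.toLp 2 (Q.mulVec a)) * Q) * Qᵀ := by rw [h]
  _ = S (WithLp.toLp 2 (Q.mulVec a)) * (Q * Qᵀ) := by rw [mul_assoc]
  _ = S (WithLp.toLp 2 (Q.mulVec a)) := by rw [hQ', mul_one]

lemma S_add (x y : V3) : S (x + y) = S x + S y := by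
  ext i j
  fin_cases i <;> fin_cases j <;>
    simp [S, Matrix.add_apply, PiLp.add_apply] <;> ring

lemma S_smul (r : ℝ) (x : V3) : S (r • x) = r • S x := by
  ext i j
  fin_cases i <;> fin_cases j <;>
    simp [S, Matrix.smul_apply, PiLp.smul_apply, smul_eq_mul]

/-- The explicit angular-velocity update follows from the two discrete
Legendre-transform equations (spherical body: J_d = (J/2)·I). -/
theorem stmt8 (J h : ℝ) (hJ : 0 < J) (hh : 0 < h)
    (R₀ R₁ : M3) (hR₀ : R₀ᵀ * R₀ = 1 ∧ R₀.det = 1) (hR₁ : R₁ᵀ * R₁ = 1 ∧ R₁.det = 1)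
    (ω₀ ω₁ M₀ M₁ : V3)
    (h0 : S (J • ω₀) = (J / (2 * h)) • (R₀ᵀ * R₁ - R₁ᵀ * R₀) - (h / 2) • S M₀)
    (h1 : S (J • ω₁) = (J / (2 * h)) • (R₀ᵀ * R₁ - R₁ᵀ * R₀) + (h / 2) • S M₁) :
    ω₁ = mulV (R₁ᵀ * R₀) (ω₀ + (h / (2 * J)) • M₀) + (h / (2 * J)) • M₁ := by
  obtain ⟨hR₀o, hR₀d⟩ := hR₀
  obtain ⟨hR₁o, hR₁d⟩ := hR₁
  have hR₀o' : R₀ * R₀ᵀ = 1 := mul_eq_one_comm.mp hR₀o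
  have hR₁o' : R₁ * R₁ᵀ = 1 := mul_eq_one_comm.mp hR₁o
  set c : ℝ := J / (2 * h) with hc
  set A : M3 := R₀ᵀ * R₁ with hA
  set Q : M3 := R₁ᵀ * R₀ with hQdef
  have hQT : Qᵀ = A := by
    rw [hQdef, Matrix.transpose_mul, Matrix.transpose_transpose, hA]
  have hAT : Aᵀ = Q := by
    rw [hA, Matrix.transpose_mul, Matrix.transpose_transpose, hQdef]
  have hQA : Q * A = 1 := by
    rw [hQdef, hA, mul_assoc, ← mul_assoc R₀, hR₀o', one_mul, hR₁o]
  have hAQ : A * Q = 1 := by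
    rw [hQdef, hA, mul_assoc, ← mul_assoc R₁, hR₁o', one_mul, hR₀o]
  have hQorth : Qᵀ * Q = 1 := by rw [hQT, hAQ]
  have hQdet : Q.det = 1 := by
    rw [hQdef, Matrix.det_mul, Matrix.det_transpose, hR₁d, hR₀d, one_mul]
  -- the conserved vector
  set a : V3 := J • ω₀ + (h / 2) • M₀ with ha
  have hSa : S a = c • (A - Q) := by
    rw [ha, S_add, h0, S_smul]
    abel
  -- Q fixes a
  have hfix : WithLp.toLp 2 (Q.mulVec a) = a := by
    apply S_inj
    rw [← conjS Q hQorth hQdet a, hSa, hQT]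
    rw [Matrix.mul_smul, Matrix.smul_mul]
    congr 1
    calc Q * (A - Q) * A = Q * A * A - Q * (Q * A) := by noncomm_ring
    _ = A - Q := by rw [hQA, one_mul, mul_one]
  -- momentum update
  have hmom : J • ω₁ = a + (h / 2) • M₁ := by
    apply S_inj
    rw [S_add, h1, hSa, S_smul]
  -- assemble
  have hJne : J ≠ 0 := ne_of_gt hJ
  have hcoef : h / (2 * J) = J⁻¹ * (h / 2) := by rw [inv_mul_eq_div, div_div]
  have key : ω₀ + (h / (2 * J)) • M₀ = J⁻¹ • a := by
    rw [ha, smul_add, inv_smul_smul₀ hJne, smul_smul, hcoef]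
  have hω₁ : ω₁ = J⁻¹ • a + (h / (2 * J)) • M₁ := by
    have := congrArg (fun v : V3 => J⁻¹ • v) hmom
    simp only [inv_smul_smul₀ hJne, smul_add, smul_smul] at this
    rw [this, hcoef]
  rw [key, hω₁, mulV]
  congr 1
  show J⁻¹ • a = WithLp.toLp 2 (Q.mulVec (J⁻¹ • a))
  rw [Matrix.mulVec_smul, WithLp.toLp_smul, hfix]
end
end

section
/- Let n ≥ 1 and let U : (M₃(ℝ))ⁿ → ℝ be differentiable and invariant under the diagonal left action of SO(3): U(Q R₁, …, Q Rₙ) = U(R₁, …, Rₙ) for every Q ∈ SO(3) and all (R₁, …, Rₙ). For a configuration with each Rᵢ ∈ SO(3), let Gᵢ denote the 3×3 matrix of partial derivatives (Gᵢ)_{ab} = ∂U/∂(Rᵢ)_{ab}. Then the total moment vanishes: Σᵢ (Rᵢ Gᵢᵀ − Gᵢ Rᵢᵀ) = 0. Consequently, along any sequence of SO(3)ⁿ configurations R_{·,k}, with moments RMᵢ,ₖ defined by S(RMᵢ,ₖ) = R_{i,k} Gᵢᵀ(R_{·,k}) − Gᵢ(R_{·,k}) R_{i,k}ᵀ and angular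 velocities updated by Ω_{i,k+1} = Ω_{i,k} + (h/(2Jᵢ))(RMᵢ,ₖ + RMᵢ,ₖ₊₁) with Jᵢ > 0 and h > 0, the total angular momentum Σᵢ Jᵢ Ω_{i,k} is constant in k. -/
set_option maxHeartbeats 1000000

open Matrix

noncomputable section

attribute [local instance] Matrix.normedAddCommGroup Matrix.normedSpace

lemma norm_sq_V3 (a : V3) : ‖a‖ ^ 2 = a 0 ^ 2 + a 1 ^ 2 + a 2 ^ 2 := by
  rw [EuclideanSpace.norm_eq, Real.sq_sqrt (by positivity)]
  simp [Fin.sum_univ_three, sq_abs]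

lemma S_transpose (a : V3) : (S a)ᵀ = -S a := by
  ext i j; fin_cases i <;> fin_cases j <;> simp [S, Matrix.vecHead, Matrix.vecTail]

lemma S_cube (a : V3) : S a * S a * S a = (-(‖a‖ ^ 2)) • S a := by
  have hn := norm_sq_V3 a
  ext i j
  fin_cases i <;> fin_cases j <;>
    (simp [S, Matrix.mul_apply, Fin.sum_univ_three, hn]; ring)

lemma cayley_left (A : M3) (r : ℝ) (hr : 0 ≤ r) (hA3 : A * A * A = (-r) • A) :
    (1 - (1/2:ℝ) • A) * (1 + (4 / (4 + r)) • (A + (1/2:ℝ) • (A * A))) = 1 + (1/2:ℝ) • A := by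
  have h4 : (4 + r) ≠ 0 := by positivity
  simp only [mul_add, add_mul, sub_mul, mul_sub, mul_one, one_mul, smul_mul_assoc,
    mul_smul_comm, smul_smul, smul_add, mul_assoc]
  rw [show A * (A * A) = (-r) • A by rw [← mul_assoc]; exact hA3]
  match_scalars <;> field_simp <;> ring

lemma cayley_right (A : M3) (r : ℝ) (hr : 0 ≤ r) (hA3 : A * A * A = (-r) • A) :
    (1 + (4 / (4 + r)) • (A + (1/2:ℝ) • (A * A))) * (1 - (1/2:ℝ) • A) = 1 + (1/2:ℝ) • A := by
  have h4 : (4 + r) ≠ 0 := by positivity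
  simp only [mul_add, add_mul, sub_mul, mul_sub, mul_one, one_mul, smul_mul_assoc,
    mul_smul_comm, smul_smul, smul_add, mul_assoc]
  rw [show A * (A * A) = (-r) • A by rw [← mul_assoc]; exact hA3]
  match_scalars <;> field_simp <;> ring

lemma det_one_add_half_S (a : V3) :
    (1 + (1/2:ℝ) • S a).det = 1 + (a 0^2 + a 1^2 + a 2^2)/4 := by
  rw [Matrix.det_fin_three]
  simp [S, Matrix.one_apply]
  ring

lemma det_one_sub_half_S (a : V3) :
    (1 - (1/2:ℝ) • S a).det = 1 + (a 0^2 + a 1^2 + a 2^2)/4 := by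
  rw [Matrix.det_fin_three]
  simp [S, Matrix.one_apply]
  ring

lemma det_one_add_ne (a : V3) : (1 + (1/2:ℝ) • S a).det ≠ 0 := by
  rw [det_one_add_half_S]; positivity

lemma Rot_cayley_left (α : V3) : (1 - (1/2:ℝ) • S α) * Rot α = 1 + (1/2:ℝ) • S α :=
  cayley_left (S α) (‖α‖^2) (by positivity) (S_cube α)

lemma Rot_cayley_right (α : V3) : Rot α * (1 - (1/2:ℝ) • S α) = 1 + (1/2:ℝ) • S α :=
  cayley_right (S α) (‖α‖^2) (by positivity) (S_cube α)

lemma Rot_det (α : V3) : (Rot α).det = 1 := by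
  have h := congrArg Matrix.det (Rot_cayley_left α)
  rw [Matrix.det_mul, det_one_sub_half_S, det_one_add_half_S] at h
  have hne : (1 : ℝ) + (α 0^2 + α 1^2 + α 2^2)/4 ≠ 0 := by positivity
  field_simp at h
  exact h

lemma Rot_orth (α : V3) : (Rot α)ᵀ * Rot α = 1 := by
  set B : M3 := (1/2:ℝ) • S α with hB
  have hBt : Bᵀ = -B := by rw [hB, Matrix.transpose_smul, S_transpose]; module
  have h1 := congrArg Matrix.transpose (Rot_cayley_right α)
  rw [Matrix.transpose_mul, Matrix.transpose_sub, Matrix.transpose_add,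
    Matrix.transpose_one, hBt] at h1
  have h2 : (1 + B) * ((Rot α)ᵀ * Rot α) = (1 + B) * 1 := by
    rw [mul_one, ← Matrix.mul_assoc]
    simp only [sub_neg_eq_add, ← sub_eq_add_neg] at h1
    rw [h1, Rot_cayley_left α]
  have hdet : (1 + B).det ≠ 0 := det_one_add_ne α
  calc (Rot α)ᵀ * Rot α
      = ((1+B)⁻¹ * (1+B)) * ((Rot α)ᵀ * Rot α) := by
        rw [Matrix.nonsing_inv_mul _ (isUnit_iff_ne_zero.mpr hdet), Matrix.one_mul]
    _ = (1+B)⁻¹ * ((1+B) * ((Rot α)ᵀ * Rot α)) := by rw [Matrix.mul_assoc]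
    _ = 1 := by rw [h2, mul_one, Matrix.nonsing_inv_mul _ (isUnit_iff_ne_zero.mpr hdet)]

lemma S_smul_s13 (t : ℝ) (a : V3) : S (t • a) = t • S a := by
  ext i j; fin_cases i <;> fin_cases j <;> simp [S, Matrix.vecHead, Matrix.vecTail]

lemma Rot_line (a : V3) (t : ℝ) :
    Rot (t • a) = 1 + (4*t/(4 + t^2*‖a‖^2)) • S a + (2*t^2/(4 + t^2*‖a‖^2)) • (S a * S a) := by
  have hnorm : ‖t • a‖ ^ 2 = t^2 * ‖a‖^2 := by
    rw [norm_smul, mul_pow, Real.norm_eq_abs, sq_abs]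
  have h4 : (4 + t^2*‖a‖^2) ≠ 0 := by positivity
  rw [Rot, S_smul_s13, hnorm]
  rw [smul_mul_assoc, mul_smul_comm, smul_smul]
  match_scalars <;> field_simp <;> ring

lemma hasDerivAt_Rot (a : V3) : HasDerivAt (fun t : ℝ => Rot (t • a)) (S a) 0 := by
  set r := ‖a‖^2 with hr
  have hr0 : 0 ≤ r := by positivity
  have hg : HasDerivAt (fun t : ℝ => 4*t/(4 + t^2*r)) 1 0 := by
    have hu : HasDerivAt (fun t : ℝ => 4*t) 4 0 := by
      simpa using (hasDerivAt_id (0:ℝ)).const_mul 4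
    have hv : HasDerivAt (fun t : ℝ => 4 + t^2*r) 0 0 := by
      have := ((hasDerivAt_pow 2 (0:ℝ)).mul_const r).const_add 4
      simpa using this
    have hv0 : (4 + (0:ℝ)^2*r) ≠ 0 := by positivity
    exact (hu.div hv hv0).congr_deriv (by norm_num)
  have hh : HasDerivAt (fun t : ℝ => 2*t^2/(4 + t^2*r)) 0 0 := by
    have hu : HasDerivAt (fun t : ℝ => 2*t^2) 0 0 := by
      have := (hasDerivAt_pow 2 (0:ℝ)).const_mul 2
      simpa using this
    have hv : HasDerivAt (fun t : ℝ => 4 + t^2*r) 0 0 := by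
      have := ((hasDerivAt_pow 2 (0:ℝ)).mul_const r).const_add 4
      simpa using this
    have hv0 : (4 + (0:ℝ)^2*r) ≠ 0 := by positivity
    exact (hu.div hv hv0).congr_deriv (by norm_num)
  have h := ((hg.smul_const (S a)).const_add 1).add (hh.smul_const (S a * S a))
  have heq : (fun t : ℝ => 1 + (4*t/(4 + t^2*r)) • S a + (2*t^2/(4 + t^2*r)) • (S a * S a))
      = fun t : ℝ => Rot (t • a) := by
    funext t; rw [Rot_line]
  rw [← heq]
  exact h.congr_deriv (by simp)

lemma Rot_zero : Rot 0 = 1 := by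
  have h := Rot_line 0 0
  simpa using h

lemma hasDerivAt_Rot_mul (a : V3) (C : M3) :
    HasDerivAt (fun t : ℝ => Rot (t • a) * C) (S a * C) 0 := by
  let L : M3 →L[ℝ] M3 :=
    LinearMap.toContinuousLinearMap ((LinearMap.mulRight ℝ C))
  have hL : ∀ X : M3, L X = X * C := fun X => rfl
  have := L.hasFDerivAt.comp_hasDerivAt 0 (hasDerivAt_Rot a)
  exact this

lemma clm_expand {n : ℕ} (φ : (Fin n → M3) →L[ℝ] ℝ) (W : Fin n → M3) :
    φ W = ∑ i, ∑ a, ∑ b, W i a b * φ (Pi.single i (Matrix.single a b 1)) := by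
  conv_lhs => rw [← Finset.univ_sum_single W, map_sum]
  refine Finset.sum_congr rfl fun i _ => ?_
  have h1 : Pi.single i (W i)
      = ∑ a, ∑ b, W i a b • (Pi.single i (Matrix.single a b (1:ℝ)) : Fin n → M3) := by
    have h2 : Pi.single i (W i) = (LinearMap.single ℝ (fun _ : Fin n => M3) i) (W i) := rfl
    rw [h2]
    conv_lhs => rw [matrix_eq_sum_single (W i)]
    rw [map_sum]
    refine Finset.sum_congr rfl fun a _ => ?_
    rw [map_sum]
    refine Finset.sum_congr rfl fun b _ => ?_
    rw [show Matrix.single a b (W i a b) = W i a b • Matrix.single a b (1:ℝ) by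
      rw [smul_single, smul_eq_mul, mul_one], _root_.map_smul]
    rfl
  rw [h1, map_sum]
  refine Finset.sum_congr rfl fun a _ => ?_
  rw [map_sum]
  refine Finset.sum_congr rfl fun b _ => ?_
  rw [_root_.map_smul, smul_eq_mul]

lemma pointwise_moment (a : V3) (Ri Gi : M3) :
    ∑ p, ∑ b, (S a * Ri) p b * Gi p b
      = a 0 * (∑ b, Ri 1 b * Gi 2 b - ∑ b, Ri 2 b * Gi 1 b)
      + a 1 * (∑ b, Ri 2 b * Gi 0 b - ∑ b, Ri 0 b * Gi 2 b)
      + a 2 * (∑ b, Ri 0 b * Gi 1 b - ∑ b, Ri 1 b * Gi 0 b) := by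
  simp [S, Matrix.mul_apply, Fin.sum_univ_three, Finset.mul_sum]
  ring

lemma S_sum {m : Type*} (s : Finset m) (f : m → V3) :
    S (∑ i ∈ s, f i) = ∑ i ∈ s, S (f i) := by
  classical
  induction s using Finset.induction_on with
  | empty => ext i j; fin_cases i <;> fin_cases j <;> simp [S, Matrix.vecHead, Matrix.vecTail]
  | insert _ _ h ih =>
    rw [Finset.sum_insert h, Finset.sum_insert h, ← ih]
    ext i j; fin_cases i <;> fin_cases j <;> simp [S, Matrix.vecHead, Matrix.vecTail] <;> ring

lemma S_eq_zero {v : V3} (h : S v = 0) : v = 0 := by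
  ext j
  fin_cases j
  · have := congrFun (congrFun h 2) 1
    simpa [S] using this
  · have := congrFun (congrFun h 0) 2
    simpa [S] using this
  · have := congrFun (congrFun h 1) 0
    simpa [S] using this

/-- If U on (M₃(ℝ))ⁿ is invariant under the diagonal left SO(3) action, the
total moment Σᵢ (Rᵢ Gᵢᵀ − Gᵢ Rᵢᵀ) vanishes on SO(3)ⁿ configurations, and hence
the angular-velocity update Ωᵢ,ₖ₊₁ = Ωᵢ,ₖ + (h/(2Jᵢ))(RMᵢ,ₖ + RMᵢ,ₖ₊₁)
conserves the total angular momentum Σᵢ Jᵢ Ωᵢ,ₖ exactly. -/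
theorem stmt13 (n : ℕ) (hn : 1 ≤ n)
    (U : (Fin n → M3) → ℝ) (hU : Differentiable ℝ U)
    (hinv : ∀ (Q : M3), Qᵀ * Q = 1 → Q.det = 1 →
      ∀ R : Fin n → M3, U (fun i => Q * R i) = U R)
    (G : Fin n → (Fin n → M3) → M3)
    (hG : ∀ i R a b, G i R a b = fderiv ℝ U R (Pi.single i (Matrix.single a b 1))) :
    (∀ R : Fin n → M3, (∀ i, (R i)ᵀ * R i = 1 ∧ (R i).det = 1) →
      ∑ i, (R i * (G i R)ᵀ - G i R * (R i)ᵀ) = 0) ∧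
    (∀ (h : ℝ), 0 < h → ∀ (Jv : Fin n → ℝ), (∀ i, 0 < Jv i) →
      ∀ (Rs : ℕ → Fin n → M3), (∀ k i, (Rs k i)ᵀ * Rs k i = 1 ∧ (Rs k i).det = 1) →
      ∀ (RM : ℕ → Fin n → V3),
        (∀ k i, S (RM k i) = Rs k i * (G i (Rs k))ᵀ - G i (Rs k) * (Rs k i)ᵀ) →
      ∀ (Ω : ℕ → Fin n → V3),
        (∀ k i, Ω (k + 1) i = Ω k i + (h / (2 * Jv i)) • (RM k i + RM (k + 1) i)) →
      ∀ k, ∑ i, Jv i • Ω k i = ∑ i, Jv i • Ω 0 i) := by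
  have main : ∀ R : Fin n → M3, (∀ i, (R i)ᵀ * R i = 1 ∧ (R i).det = 1) →
      ∑ i, (R i * (G i R)ᵀ - G i R * (R i)ᵀ) = 0 := by
    intro R hR
    have hzero : ∀ a : V3, fderiv ℝ U R (fun i => S a * R i) = 0 := by
      intro a
      have hf' : HasDerivAt (fun t : ℝ => fun i => Rot (t • a) * R i)
          (fun i => S a * R i) 0 :=
        hasDerivAt_pi.2 fun i => hasDerivAt_Rot_mul a (R i)
      have hf0 : (fun i => Rot ((0:ℝ) • a) * R i) = R := by
        funext i; simp [Rot_zero]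
      have hFd : HasFDerivAt U (fderiv ℝ U R) (fun i => Rot ((0:ℝ) • a) * R i) := by
        rw [hf0]; exact (hU R).hasFDerivAt
      have hcomp := hFd.comp_hasDerivAt 0 hf'
      have hconst : (fun t : ℝ => U (fun i => Rot (t • a) * R i)) = fun _ => U R := by
        funext t
        exact hinv (Rot (t • a)) (Rot_orth _) (Rot_det _) R
      have hcomp' : HasDerivAt (fun t : ℝ => U (fun i => Rot (t • a) * R i))
          ((fderiv ℝ U R) fun i => S a * R i) 0 := hcomp
      rw [hconst] at hcomp'
      exact ((hasDerivAt_const (0:ℝ) (U R)).unique hcomp').symm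
    have hkey : ∀ a : V3,
        ∑ i, (a 0 * (∑ b, R i 1 b * G i R 2 b - ∑ b, R i 2 b * G i R 1 b)
            + a 1 * (∑ b, R i 2 b * G i R 0 b - ∑ b, R i 0 b * G i R 2 b)
            + a 2 * (∑ b, R i 0 b * G i R 1 b - ∑ b, R i 1 b * G i R 0 b)) = 0 := by
      intro a
      have h1 := clm_expand (fderiv ℝ U R) (fun i => S a * R i)
      simp only [← hG] at h1
      rw [hzero a] at h1
      have h2 : ∑ i, ∑ p, ∑ b, (S a * R i) p b * G i R p b
          = ∑ i, (a 0 * (∑ b, R i 1 b * G i R 2 b - ∑ b, R i 2 b * G i R 1 b)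
            + a 1 * (∑ b, R i 2 b * G i R 0 b - ∑ b, R i 0 b * G i R 2 b)
            + a 2 * (∑ b, R i 0 b * G i R 1 b - ∑ b, R i 1 b * G i R 0 b)) :=
        Finset.sum_congr rfl fun i _ => pointwise_moment a (R i) (G i R)
      rw [← h2, ← h1]
    have E : ∀ c : Fin 3,
        ∑ i, ((EuclideanSpace.single c (1:ℝ)) 0
            * (∑ b, R i 1 b * G i R 2 b - ∑ b, R i 2 b * G i R 1 b)
          + (EuclideanSpace.single c (1:ℝ)) 1
            * (∑ b, R i 2 b * G i R 0 b - ∑ b, R i 0 b * G i R 2 b)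
          + (EuclideanSpace.single c (1:ℝ)) 2
            * (∑ b, R i 0 b * G i R 1 b - ∑ b, R i 1 b * G i R 0 b)) = 0 :=
      fun c => hkey (EuclideanSpace.single c 1)
    have E0 := E 0
    have E1 := E 1
    have E2 := E 2
    simp only [EuclideanSpace.single_apply] at E0 E1 E2
    simp (config := { decide := true }) only [if_true, if_false, one_mul, zero_mul,
      add_zero, zero_add, Fin.reduceEq, reduceIte] at E0 E1 E2
    rw [Finset.sum_sub_distrib, sub_eq_zero] at E0 E1 E2
    have main2 : ∀ p q : Fin 3,
        ∑ i, ∑ b, R i p b * G i R q b = ∑ i, ∑ b, R i q b * G i R p b := by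
      intro p q
      fin_cases p <;> fin_cases q
      exacts [rfl, E2, E1.symm, E2.symm, rfl, E0, E1, E0.symm, rfl]
    ext p q
    simp only [Matrix.sum_apply, Matrix.sub_apply, Matrix.mul_apply, Matrix.transpose_apply,
      Matrix.zero_apply]
    rw [Finset.sum_sub_distrib, sub_eq_zero, main2 p q]
    exact Finset.sum_congr rfl fun i _ => Finset.sum_congr rfl fun b _ => mul_comm _ _
  refine ⟨main, ?_⟩
  intro h hpos Jv hJ Rs hRs RM hRM Ω hΩ k
  have hRMsum : ∀ k, ∑ i, RM k i = 0 := by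
    intro k
    apply S_eq_zero
    rw [S_sum]
    have heq : ∑ i, S (RM k i)
        = ∑ i, (Rs k i * (G i (Rs k))ᵀ - G i (Rs k) * (Rs k i)ᵀ) :=
      Finset.sum_congr rfl fun i _ => hRM k i
    rw [heq, main (Rs k) (hRs k)]
  induction k with
  | zero => rfl
  | succ k ih =>
    rw [← ih]
    have step : ∀ i, Jv i • Ω (k+1) i = Jv i • Ω k i + (h/2) • (RM k i + RM (k+1) i) := by
      intro i
      rw [hΩ k i, smul_add, smul_smul]
      have hJne : Jv i ≠ 0 := (hJ i).ne'
      congr 1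
      congr 1
      field_simp
    calc ∑ i, Jv i • Ω (k+1) i
        = ∑ i, (Jv i • Ω k i + (h/2) • (RM k i + RM (k+1) i)) :=
          Finset.sum_congr rfl fun i _ => step i
      _ = ∑ i, Jv i • Ω k i + (h/2) • (∑ i, (RM k i + RM (k+1) i)) := by
          rw [Finset.sum_add_distrib, Finset.smul_sum]
      _ = ∑ i, Jv i • Ω k i := by
          rw [Finset.sum_add_distrib, hRMsum k, hRMsum (k+1), add_zero, smul_zero, add_zero]
end
end
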